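/- Consider the dimer subshift with the Bernoulli measure where each dimer {2n, 2n+1} is independently decorated (1,−1) or (−1,1) with probability 1/2 each. Then almost surely the autocorrelation coefficients η(m) = lim_{N→∞} (1/(2N+1)) ∑_{n=−N}^{N} w(n)w(n+m) exist and equal η(0)=1, η(±1)=−1/2, and η(m)=0 for |m| ≥ 2. -/

import Mathlib

open MeasureTheory ProbabilityTheory Filter
open scoped ENNReal
open scoped Classical
set_option linter.deprecated false

set_option linter.unusedSectionVars false

section Core
variable {Ω : Type*} [MeasurableSpace Ω] (μ : Measure Ω) [IsProbabilityMeasure μ]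
  (ε : ℤ → Ω → ℝ)

lemma bad_null (hone : ∀ n, μ {ω | ε n ω = 1} = 1 / 2)
    (hmone : ∀ n, μ {ω | ε n ω = -1} = 1 / 2) (hmeas : ∀ n, Measurable (ε n)) (n : ℤ) :
    μ {ω | ε n ω = 1 ∨ ε n ω = -1}ᶜ = 0 := by
  have h1 : MeasurableSet {ω | ε n ω = 1} := (hmeas n) (measurableSet_singleton 1)
  have h2 : MeasurableSet {ω | ε n ω = -1} := (hmeas n) (measurableSet_singleton (-1))
  have hd : Disjoint {ω | ε n ω = 1} {ω | ε n ω = -1} := by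
    rw [Set.disjoint_left]; intro ω hω1 hω2
    simp only [Set.mem_setOf_eq] at hω1 hω2; rw [hω1] at hω2; norm_num at hω2
  have hu : μ ({ω | ε n ω = 1} ∪ {ω | ε n ω = -1}) = 1 := by
    rw [measure_union hd h2, hone, hmone]
    rw [ENNReal.div_add_div_same, one_add_one_eq_two]
    exact ENNReal.div_self two_ne_zero ENNReal.ofNat_ne_top
  have : μ ({ω | ε n ω = 1} ∪ {ω | ε n ω = -1})ᶜ = 0 := by
    rw [measure_compl (h1.union h2) (measure_ne_top μ _), hu, measure_univ, tsub_self]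
  refine measure_mono_null ?_ this
  intro ω hω
  simp only [Set.mem_compl_iff, Set.mem_union, Set.mem_setOf_eq] at *
  tauto

lemma sign_ae (hone : ∀ n, μ {ω | ε n ω = 1} = 1 / 2)
    (hmone : ∀ n, μ {ω | ε n ω = -1} = 1 / 2) (hmeas : ∀ n, Measurable (ε n)) :
    ∀ᵐ ω ∂μ, ∀ n, ε n ω = 1 ∨ ε n ω = -1 := by
  rw [ae_all_iff]
  intro n
  exact bad_null μ ε hone hmone hmeas n

lemma meas_inter2 (hindep : iIndepFun ε μ)
    (p q : ℤ) (hpq : p ≠ q) (A B : Set ℝ) (hA : MeasurableSet A) (hB : MeasurableSet B) :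
    μ (ε p ⁻¹' A ∩ ε q ⁻¹' B) = μ (ε p ⁻¹' A) * μ (ε q ⁻¹' B) := by
  classical
  have := hindep.measure_inter_preimage_eq_mul ({p, q} : Finset ℤ)
    (sets := fun i => if i = p then A else if i = q then B else Set.univ) ?_
  · rw [Finset.set_biInter_insert, Finset.set_biInter_singleton] at this
    rw [Finset.prod_insert (by simp [hpq]), Finset.prod_singleton] at this
    simpa [hpq, Ne.symm hpq] using this
  · intro i _
    by_cases h1 : i = p <;> by_cases h2 : i = q <;>
      simp [h1, h2, hA, hB, Ne.symm hpq]

lemma meas_inter3 (hindep : iIndepFun ε μ)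
    (p q r : ℤ) (hpq : p ≠ q) (hpr : p ≠ r) (hqr : q ≠ r)
    (A B C : Set ℝ) (hA : MeasurableSet A) (hB : MeasurableSet B) (hC : MeasurableSet C) :
    μ (ε p ⁻¹' A ∩ ε q ⁻¹' B ∩ ε r ⁻¹' C)
      = μ (ε p ⁻¹' A) * μ (ε q ⁻¹' B) * μ (ε r ⁻¹' C) := by
  classical
  have := hindep.measure_inter_preimage_eq_mul ({p, q, r} : Finset ℤ)
    (sets := fun i => if i = p then A else if i = q then B else if i = r then C else Set.univ) ?_
  · rw [Finset.set_biInter_insert, Finset.set_biInter_insert,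
      Finset.set_biInter_singleton] at this
    rw [Finset.prod_insert (by simp [hpq, hpr]), Finset.prod_insert (by simp [hqr]),
      Finset.prod_singleton] at this
    simpa [hpq, hpr, hqr, Ne.symm hpq, Ne.symm hpr, Ne.symm hqr, Set.inter_assoc,
      mul_assoc] using this
  · intro i _
    by_cases h1 : i = p <;> by_cases h2 : i = q <;> by_cases h3 : i = r <;>
      simp [h1, h2, h3, hA, hB, hC, Ne.symm hpq, Ne.symm hpr, Ne.symm hqr]

end Core

section Law
variable {Ω : Type*} [MeasurableSpace Ω] (μ : Measure Ω) [IsProbabilityMeasure μ]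
  (ε : ℤ → Ω → ℝ)

lemma eps_pre (hone : ∀ n, μ {ω | ε n ω = 1} = 1 / 2)
    (hmone : ∀ n, μ {ω | ε n ω = -1} = 1 / 2) (n : ℤ) (x : ℝ) (hx : x = 1 ∨ x = -1) :
    μ (ε n ⁻¹' {x}) = 2⁻¹ := by
  have h : ∀ y : ℝ, ε n ⁻¹' {y} = {ω | ε n ω = y} := fun y => rfl
  rcases hx with h'|h' <;> subst h'
  · rw [h, hone n, one_div]
  · rw [h, hmone n, one_div]

lemma joint_law (hmeas : ∀ n, Measurable (ε n))
    (hindep : iIndepFun ε μ)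
    (hone : ∀ n, μ {ω | ε n ω = 1} = 1 / 2)
    (hmone : ∀ n, μ {ω | ε n ω = -1} = 1 / 2)
    (p q r : ℤ) (hpq : p ≠ q) (hpr : p ≠ r) (hqr : q ≠ r)
    (s t : Set ℝ) (hs : MeasurableSet s) (ht : MeasurableSet t) :
    μ ((fun ω => ε p ω * ε q ω) ⁻¹' s ∩ (fun ω => ε q ω * ε r ω) ⁻¹' t)
      = ((if (1:ℝ) ∈ s then (2:ℝ≥0∞)⁻¹ else 0) + (if (-1:ℝ) ∈ s then (2:ℝ≥0∞)⁻¹ else 0))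
        * ((if (1:ℝ) ∈ t then (2:ℝ≥0∞)⁻¹ else 0) + (if (-1:ℝ) ∈ t then (2:ℝ≥0∞)⁻¹ else 0)) := by
  classical
  have hh : (2:ℝ≥0∞)⁻¹ + 2⁻¹ = 1 := by
    rw [← two_mul, ENNReal.mul_inv_cancel two_ne_zero ENNReal.ofNat_ne_top]
  set X := fun ω => ε p ω * ε q ω with hXdef
  set Y := fun ω => ε q ω * ε r ω with hYdef
  have hXm : Measurable X := (hmeas p).mul (hmeas q)
  have hYm : Measurable Y := (hmeas q).mul (hmeas r)
  set E : ℝ → ℝ → Set Ω := fun u v => X ⁻¹' {u} ∩ Y ⁻¹' {v} with hEdef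
  have hEm : ∀ u v : ℝ, MeasurableSet (E u v) := fun u v =>
    (hXm (measurableSet_singleton u)).inter (hYm (measurableSet_singleton v))
  set G : Set Ω := {ω | (ε p ω = 1 ∨ ε p ω = -1) ∧ (ε q ω = 1 ∨ ε q ω = -1)
    ∧ (ε r ω = 1 ∨ ε r ω = -1)} with hGdef
  have hGc : μ Gᶜ = 0 := by
    refine measure_mono_null ?_ (measure_union_null (measure_union_null
      (bad_null μ ε hone hmone hmeas p) (bad_null μ ε hone hmone hmeas q))
      (bad_null μ ε hone hmone hmeas r))
    intro ω hω
    simp only [hGdef, Set.mem_compl_iff, Set.mem_union, Set.mem_setOf_eq] at *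
    tauto
  have hEval : ∀ u v : ℝ, (u = 1 ∨ u = -1) → (v = 1 ∨ v = -1) →
      μ (E u v) = 2⁻¹ * 2⁻¹ := by
    intro u v hu hv
    have hset : E u v ∩ G = ((ε p ⁻¹' {u} ∩ ε q ⁻¹' {(1:ℝ)} ∩ ε r ⁻¹' {v})
        ∪ (ε p ⁻¹' {-u} ∩ ε q ⁻¹' {(-1:ℝ)} ∩ ε r ⁻¹' {-v})) ∩ G := by
      ext ω
      simp only [hEdef, hGdef, Set.mem_inter_iff, Set.mem_union, Set.mem_preimage,
        Set.mem_singleton_iff, Set.mem_setOf_eq]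
      constructor
      · rintro ⟨⟨hXu, hYv⟩, hGm⟩
        refine ⟨?_, hGm⟩
        obtain ⟨hp', hq', hr'⟩ := hGm
        simp only [hXdef, hYdef] at hXu hYv
        rcases hq' with h|h
        · left
          rw [h] at hXu hYv
          exact ⟨⟨by linarith, h⟩, by linarith⟩
        · right
          rw [h] at hXu hYv
          exact ⟨⟨by linarith, h⟩, by linarith⟩
      · rintro ⟨hmem, hGm⟩
        refine ⟨?_, hGm⟩
        simp only [hXdef, hYdef]
        rcases hmem with ⟨⟨hp', hq'⟩, hr'⟩ | ⟨⟨hp', hq'⟩, hr'⟩ <;>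
          rw [hp', hq', hr'] <;> constructor <;> ring
    have hmu : μ (E u v) = μ (E u v ∩ G) := (measure_inter_conull hGc).symm
    rw [hmu, hset, measure_inter_conull hGc]
    have hdisj : Disjoint (ε p ⁻¹' {u} ∩ ε q ⁻¹' {(1:ℝ)} ∩ ε r ⁻¹' {v})
        (ε p ⁻¹' {-u} ∩ ε q ⁻¹' {(-1:ℝ)} ∩ ε r ⁻¹' {-v}) := by
      rw [Set.disjoint_left]
      rintro ω ⟨⟨_, h1'⟩, _⟩ ⟨⟨_, h2'⟩, _⟩
      simp only [Set.mem_preimage, Set.mem_singleton_iff] at h1' h2'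
      rw [h1'] at h2'; norm_num at h2'
    have hmeas2 : MeasurableSet (ε p ⁻¹' {-u} ∩ ε q ⁻¹' {(-1:ℝ)} ∩ ε r ⁻¹' {-v}) :=
      (((hmeas p) (measurableSet_singleton _)).inter
        ((hmeas q) (measurableSet_singleton _))).inter ((hmeas r) (measurableSet_singleton _))
    rw [measure_union hdisj hmeas2]
    have hnu : -u = 1 ∨ -u = -1 := by rcases hu with h|h <;> rw [h] <;> norm_num
    have hnv : -v = 1 ∨ -v = -1 := by rcases hv with h|h <;> rw [h] <;> norm_num
    rw [meas_inter3 μ ε hindep p q r hpq hpr hqr _ _ _ (measurableSet_singleton _)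
      (measurableSet_singleton _) (measurableSet_singleton _),
      meas_inter3 μ ε hindep p q r hpq hpr hqr _ _ _ (measurableSet_singleton _)
      (measurableSet_singleton _) (measurableSet_singleton _)]
    rw [eps_pre μ ε hone hmone p u hu, eps_pre μ ε hone hmone q 1 (Or.inl rfl),
      eps_pre μ ε hone hmone r v hv, eps_pre μ ε hone hmone p (-u) hnu,
      eps_pre μ ε hone hmone q (-1) (Or.inr rfl), eps_pre μ ε hone hmone r (-v) hnv]
    have : (2:ℝ≥0∞)⁻¹ * 2⁻¹ * 2⁻¹ + 2⁻¹ * 2⁻¹ * 2⁻¹ = (2⁻¹ * 2⁻¹) * (2⁻¹ + 2⁻¹) := by ring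
    rw [this, hh, mul_one]
  have hcov : μ (E 1 1 ∪ E 1 (-1) ∪ E (-1) 1 ∪ E (-1) (-1))ᶜ = 0 := by
    refine measure_mono_null (Set.compl_subset_compl.mpr ?_) hGc
    rintro ω ⟨hp'|hp', hq'|hq', hr'|hr'⟩ <;>
      simp only [hEdef, hXdef, hYdef, Set.mem_union, Set.mem_inter_iff, Set.mem_preimage,
        Set.mem_singleton_iff, hp', hq', hr'] <;> norm_num
  have hEdisj : ∀ u v u' v' : ℝ, (u ≠ u' ∨ v ≠ v') → Disjoint (E u v) (E u' v') := by
    intro u v u' v' h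
    rw [Set.disjoint_left]
    rintro ω ⟨h1', h2'⟩ ⟨h3', h4'⟩
    simp only [Set.mem_preimage, Set.mem_singleton_iff] at h1' h2' h3' h4'
    rcases h with h|h
    · exact h (h1'.symm.trans h3')
    · exact h (h2'.symm.trans h4')
  have hdec : μ (X ⁻¹' s ∩ Y ⁻¹' t) = μ ((X ⁻¹' s ∩ Y ⁻¹' t) ∩ E 1 1)
      + μ ((X ⁻¹' s ∩ Y ⁻¹' t) ∩ E 1 (-1)) + μ ((X ⁻¹' s ∩ Y ⁻¹' t) ∩ E (-1) 1)
      + μ ((X ⁻¹' s ∩ Y ⁻¹' t) ∩ E (-1) (-1)) := by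
    set T := X ⁻¹' s ∩ Y ⁻¹' t with hTdef
    have h1 : μ T = μ (T ∩ (E 1 1 ∪ E 1 (-1) ∪ E (-1) 1 ∪ E (-1) (-1))) :=
      (measure_inter_conull hcov).symm
    rw [h1, Set.inter_union_distrib_left, Set.inter_union_distrib_left,
      Set.inter_union_distrib_left]
    have hTm : MeasurableSet T := (hXm hs).inter (hYm ht)
    have d1 : Disjoint (T ∩ E 1 1 ∪ T ∩ E 1 (-1) ∪ T ∩ E (-1) 1) (T ∩ E (-1) (-1)) := by
      refine Disjoint.union_left (Disjoint.union_left ?_ ?_) ?_ <;>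
        exact Disjoint.mono Set.inter_subset_right Set.inter_subset_right
          (hEdisj _ _ _ _ (by norm_num))
    have d2 : Disjoint (T ∩ E 1 1 ∪ T ∩ E 1 (-1)) (T ∩ E (-1) 1) := by
      refine Disjoint.union_left ?_ ?_ <;>
        exact Disjoint.mono Set.inter_subset_right Set.inter_subset_right
          (hEdisj _ _ _ _ (by norm_num))
    have d3 : Disjoint (T ∩ E 1 1) (T ∩ E 1 (-1)) :=
      Disjoint.mono Set.inter_subset_right Set.inter_subset_right
        (hEdisj _ _ _ _ (by norm_num))
    rw [measure_union d1 (hTm.inter (hEm _ _)), measure_union d2 (hTm.inter (hEm _ _)),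
      measure_union d3 (hTm.inter (hEm _ _))]
  have hTE : ∀ u v : ℝ, (X ⁻¹' s ∩ Y ⁻¹' t) ∩ E u v
      = if u ∈ s ∧ v ∈ t then E u v else ∅ := by
    intro u v
    split_ifs with h
    · ext ω
      simp only [hEdef, Set.mem_inter_iff, Set.mem_preimage, Set.mem_singleton_iff]
      constructor
      · rintro ⟨_, h'⟩; exact h'
      · rintro ⟨h1', h2'⟩
        exact ⟨⟨by rw [h1']; exact h.1, by rw [h2']; exact h.2⟩, h1', h2'⟩
    · ext ω
      simp only [hEdef, Set.mem_inter_iff, Set.mem_preimage, Set.mem_singleton_iff,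
        Set.mem_empty_iff_false, iff_false]
      rintro ⟨⟨hXs, hYt⟩, h1', h2'⟩
      rw [h1'] at hXs; rw [h2'] at hYt
      exact h ⟨hXs, hYt⟩
  rw [hdec, hTE, hTE, hTE, hTE]
  have e11 := hEval 1 1 (Or.inl rfl) (Or.inl rfl)
  have e1m := hEval 1 (-1) (Or.inl rfl) (Or.inr rfl)
  have em1 := hEval (-1) 1 (Or.inr rfl) (Or.inl rfl)
  have emm := hEval (-1) (-1) (Or.inr rfl) (Or.inr rfl)
  by_cases h1s : (1:ℝ) ∈ s <;> by_cases h2s : (-1:ℝ) ∈ s <;>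
    by_cases h1t : (1:ℝ) ∈ t <;> by_cases h2t : (-1:ℝ) ∈ t <;>
    simp only [h1s, h2s, h1t, h2t, and_true, and_false, true_and, false_and, if_true,
      if_false, and_self, measure_empty, e11, e1m, em1, emm] <;> ring

lemma marg_law (hmeas : ∀ n, Measurable (ε n))
    (hindep : iIndepFun ε μ)
    (hone : ∀ n, μ {ω | ε n ω = 1} = 1 / 2)
    (hmone : ∀ n, μ {ω | ε n ω = -1} = 1 / 2)
    (p q : ℤ) (hpq : p ≠ q) (s : Set ℝ) (hs : MeasurableSet s) :
    μ ((fun ω => ε p ω * ε q ω) ⁻¹' s)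
      = (if (1:ℝ) ∈ s then (2:ℝ≥0∞)⁻¹ else 0) + (if (-1:ℝ) ∈ s then (2:ℝ≥0∞)⁻¹ else 0) := by
  have hh : (2:ℝ≥0∞)⁻¹ + 2⁻¹ = 1 := by
    rw [← two_mul, ENNReal.mul_inv_cancel two_ne_zero ENNReal.ofNat_ne_top]
  have h1 : p ≤ max p q := le_max_left p q
  have h2 : q ≤ max p q := le_max_right p q
  have hpr : p ≠ max p q + 1 := by omega
  have hqr : q ≠ max p q + 1 := by omega
  have := joint_law μ ε hmeas hindep hone hmone p q (max p q + 1) hpq hpr hqr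
    s Set.univ hs MeasurableSet.univ
  simp only [Set.preimage_univ, Set.inter_univ, Set.mem_univ, if_true] at this
  rw [this, hh, mul_one]

lemma indep_B1 (hmeas : ∀ n, Measurable (ε n))
    (hindep : iIndepFun ε μ)
    (hone : ∀ n, μ {ω | ε n ω = 1} = 1 / 2)
    (hmone : ∀ n, μ {ω | ε n ω = -1} = 1 / 2)
    (p q r : ℤ) (hpq : p ≠ q) (hpr : p ≠ r) (hqr : q ≠ r) :
    IndepFun (fun ω => ε p ω * ε q ω) (fun ω => ε q ω * ε r ω) μ := by
  rw [indepFun_iff_measure_inter_preimage_eq_mul]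
  intro s t hs ht
  rw [joint_law μ ε hmeas hindep hone hmone p q r hpq hpr hqr s t hs ht,
    marg_law μ ε hmeas hindep hone hmone p q hpq s hs,
    marg_law μ ε hmeas hindep hone hmone q r hqr t ht]

end Law

section Indep
variable {Ω : Type*} [MeasurableSpace Ω] (μ : Measure Ω) [IsProbabilityMeasure μ]
  (ε : ℤ → Ω → ℝ)

lemma sign_ae_one (hone : ∀ n, μ {ω | ε n ω = 1} = 1 / 2)
    (hmone : ∀ n, μ {ω | ε n ω = -1} = 1 / 2) (hmeas : ∀ n, Measurable (ε n)) (n : ℤ) :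
    ∀ᵐ ω ∂μ, ε n ω = 1 ∨ ε n ω = -1 := by
  rw [ae_iff]
  have := bad_null μ ε hone hmone hmeas n
  rw [Set.compl_setOf] at this
  exact this

lemma indep_pairs (hmeas : ∀ n, Measurable (ε n))
    (hindep : iIndepFun ε μ)
    (hone : ∀ n, μ {ω | ε n ω = 1} = 1 / 2)
    (hmone : ∀ n, μ {ω | ε n ω = -1} = 1 / 2)
    (p q r s' : ℤ) (hpq : p ≠ q) (hrs : r ≠ s')
    (h1 : ¬(p = r ∧ q = s')) (h2 : ¬(p = s' ∧ q = r)) :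
    IndepFun (fun ω => ε p ω * ε q ω) (fun ω => ε r ω * ε s' ω) μ := by
  by_cases hpr : p = r
  · subst hpr
    have hqs : q ≠ s' := fun h => h1 ⟨rfl, h⟩
    have key := indep_B1 μ ε hmeas hindep hone hmone q p s' (Ne.symm hpq) hqs hrs
    have e1 : (fun ω => ε q ω * ε p ω) = fun ω => ε p ω * ε q ω := by funext ω; ring
    rwa [e1] at key
  by_cases hps : p = s'
  · subst hps
    have hqr : q ≠ r := fun h => h2 ⟨rfl, h⟩
    have key := indep_B1 μ ε hmeas hindep hone hmone q p r (Ne.symm hpq) hqr (Ne.symm hrs)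
    have e1 : (fun ω => ε q ω * ε p ω) = fun ω => ε p ω * ε q ω := by funext ω; ring
    have e2 : (fun ω => ε p ω * ε r ω) = fun ω => ε r ω * ε p ω := by funext ω; ring
    rwa [e1, e2] at key
  by_cases hqr : q = r
  · subst hqr
    exact indep_B1 μ ε hmeas hindep hone hmone p q s' hpq hps hrs
  by_cases hqs : q = s'
  · subst hqs
    have key := indep_B1 μ ε hmeas hindep hone hmone p q r hpq hpr hqr
    have e2 : (fun ω => ε q ω * ε r ω) = fun ω => ε r ω * ε q ω := by funext ω; ring
    rwa [e2] at key
  · exact hindep.indepFun_mul_mul hmeas p q r s' hpr hps hqr hqs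

lemma law_map (hmeas : ∀ n, Measurable (ε n))
    (hindep : iIndepFun ε μ)
    (hone : ∀ n, μ {ω | ε n ω = 1} = 1 / 2)
    (hmone : ∀ n, μ {ω | ε n ω = -1} = 1 / 2)
    (p q : ℤ) (hpq : p ≠ q) :
    Measure.map (fun ω => ε p ω * ε q ω) μ
      = (2:ℝ≥0∞)⁻¹ • Measure.dirac (1:ℝ) + (2:ℝ≥0∞)⁻¹ • Measure.dirac (-1:ℝ) := by
  ext s hs
  rw [Measure.map_apply (f := fun ω => ε p ω * ε q ω) ((hmeas p).mul (hmeas q)) hs,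
    marg_law μ ε hmeas hindep hone hmone p q hpq s hs,
    Measure.add_apply, Measure.smul_apply, Measure.smul_apply,
    Measure.dirac_apply' _ hs, Measure.dirac_apply' _ hs]
  simp only [Set.indicator_apply, Pi.one_apply, smul_eq_mul]
  split_ifs <;> simp

lemma int_zero (hmeas : ∀ n, Measurable (ε n))
    (hindep : iIndepFun ε μ)
    (hone : ∀ n, μ {ω | ε n ω = 1} = 1 / 2)
    (hmone : ∀ n, μ {ω | ε n ω = -1} = 1 / 2)
    (p q : ℤ) (hpq : p ≠ q) :
    ∫ ω, ε p ω * ε q ω ∂μ = 0 := by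
  set X : Ω → ℝ := fun ω => ε p ω * ε q ω with hXdef
  have hXm : Measurable X := (hmeas p).mul (hmeas q)
  have hA : MeasurableSet (X ⁻¹' {(1:ℝ)}) := hXm (measurableSet_singleton _)
  have hB : MeasurableSet (X ⁻¹' {(-1:ℝ)}) := hXm (measurableSet_singleton _)
  have hmuA : μ (X ⁻¹' {(1:ℝ)}) = 2⁻¹ := by
    rw [marg_law μ ε hmeas hindep hone hmone p q hpq _ (measurableSet_singleton _)]
    norm_num
  have hmuB : μ (X ⁻¹' {(-1:ℝ)}) = 2⁻¹ := by
    rw [marg_law μ ε hmeas hindep hone hmone p q hpq _ (measurableSet_singleton _)]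
    norm_num
  have hae : X =ᵐ[μ] fun ω => (X ⁻¹' {(1:ℝ)}).indicator (1 : Ω → ℝ) ω
      - (X ⁻¹' {(-1:ℝ)}).indicator (1 : Ω → ℝ) ω := by
    filter_upwards [sign_ae_one μ ε hone hmone hmeas p, sign_ae_one μ ε hone hmone hmeas q]
      with ω h1 h2
    rcases h1 with h1|h1 <;> rcases h2 with h2|h2 <;>
      norm_num [hXdef, Set.indicator_apply, Set.mem_preimage, Pi.one_apply, h1, h2]
  have i1 : Integrable (fun ω => (X ⁻¹' {(1:ℝ)}).indicator (1 : Ω → ℝ) ω) μ :=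
    (integrable_const (1:ℝ)).indicator hA
  have i2 : Integrable (fun ω => (X ⁻¹' {(-1:ℝ)}).indicator (1 : Ω → ℝ) ω) μ :=
    (integrable_const (1:ℝ)).indicator hB
  rw [integral_congr_ae hae]
  have hsub := integral_sub i1 i2
  rw [hsub, integral_indicator_one hA, integral_indicator_one hB, measureReal_def, measureReal_def, hmuA, hmuB, sub_self]

lemma slln (hmeas : ∀ n, Measurable (ε n))
    (hindep : iIndepFun ε μ)
    (hone : ∀ n, μ {ω | ε n ω = 1} = 1 / 2)
    (hmone : ∀ n, μ {ω | ε n ω = -1} = 1 / 2)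
    (a : ℕ → ℤ) (ha : Function.Injective a) (e : ℤ) (he : e ≠ 0) :
    ∀ᵐ ω ∂μ, Tendsto (fun K : ℕ => (∑ i ∈ Finset.range K, ε (a i) ω * ε (a i + e) ω) / K)
      atTop (nhds 0) := by
  set X : ℕ → Ω → ℝ := fun i ω => ε (a i) ω * ε (a i + e) ω with hXdef
  have hne : ∀ i, a i ≠ a i + e := fun i h => he (by omega)
  have hXm : ∀ i, Measurable (X i) := fun i => (hmeas _).mul (hmeas _)
  have hint : Integrable (X 0) μ := by
    refine Integrable.mono' (integrable_const 1) (hXm 0).aestronglyMeasurable ?_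
    filter_upwards [sign_ae_one μ ε hone hmone hmeas (a 0),
      sign_ae_one μ ε hone hmone hmeas (a 0 + e)] with ω h1 h2
    rcases h1 with h1|h1 <;> rcases h2 with h2|h2 <;>
      norm_num [hXdef, h1, h2]
  have hindep' : Pairwise (Function.onFun (IndepFun · · μ) X) := by
    intro i j hij
    refine indep_pairs μ ε hmeas hindep hone hmone (a i) (a i + e) (a j) (a j + e)
      (hne i) (hne j) ?_ ?_
    · rintro ⟨h1', _⟩; exact hij (ha h1')
    · rintro ⟨h1', h2'⟩; omega
  have hident : ∀ i, IdentDistrib (X i) (X 0) μ μ := fun i =>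
    ⟨(hXm i).aemeasurable, (hXm 0).aemeasurable, by
      rw [show X i = fun ω => ε (a i) ω * ε (a i + e) ω from rfl,
        show X 0 = fun ω => ε (a 0) ω * ε (a 0 + e) ω from rfl,
        law_map μ ε hmeas hindep hone hmone (a i) _ (hne i),
        law_map μ ε hmeas hindep hone hmone (a 0) _ (hne 0)]⟩
  have h0 : μ[X 0] = 0 := int_zero μ ε hmeas hindep hone hmone (a 0) _ (hne 0)
  have := strong_law_ae_real X hint hindep' hident
  rw [h0] at this
  exact this

end Indep

section Det

lemma sum_Icc_parity (h c₁ c₂ : ℤ → ℝ) (he : ∀ k : ℤ, h (2*k) = c₁ k)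
    (ho : ∀ k : ℤ, h (2*k+1) = c₂ k) (N : ℕ) :
    ∑ n ∈ Finset.Icc (-(N:ℤ)) N, h n
      = ((∑ j ∈ Finset.range (N/2+1), c₁ (j:ℤ)) + (∑ j ∈ Finset.range (N/2), c₁ (-1-(j:ℤ))))
      + ((∑ j ∈ Finset.range ((N+1)/2), c₂ (j:ℤ))
        + (∑ j ∈ Finset.range ((N+1)/2), c₂ (-1-(j:ℤ)))) := by
  induction N with
  | zero =>
    have h0 : h 0 = c₁ 0 := by have := he 0; norm_num at this; exact this
    norm_num [h0]
  | succ N ih =>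
    have hins : Finset.Icc (-((N+1:ℕ):ℤ)) ((N+1:ℕ):ℤ)
        = insert (-((N:ℤ)+1)) (insert ((N:ℤ)+1) (Finset.Icc (-(N:ℤ)) (N:ℤ))) := by
      ext x
      simp only [Finset.mem_Icc, Finset.mem_insert]
      push_cast
      omega
    have hn1 : ((N:ℤ)+1) ∉ Finset.Icc (-(N:ℤ)) (N:ℤ) := by
      simp only [Finset.mem_Icc]; omega
    have hn2 : (-((N:ℤ)+1)) ∉ insert ((N:ℤ)+1) (Finset.Icc (-(N:ℤ)) (N:ℤ)) := by
      simp only [Finset.mem_insert, Finset.mem_Icc]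
      push_cast
      omega
    rw [hins, Finset.sum_insert hn2, Finset.sum_insert hn1, ih]
    rcases Nat.even_or_odd N with ⟨M, hM⟩ | ⟨M, hM⟩
    · subst hM
      rw [show -(((M+M:ℕ):ℤ)+1) = 2*(-1-(M:ℤ))+1 by push_cast; ring,
        show (((M+M:ℕ):ℤ)+1) = 2*(M:ℤ)+1 by push_cast; ring, ho, ho,
        show (M+M+1)/2 = M from by omega, show (M+M+1+1)/2 = M+1 from by omega,
        show (M+M)/2 = M from by omega,
        Finset.sum_range_succ (fun j => c₂ (j:ℤ)) M,
        Finset.sum_range_succ (fun j => c₂ (-1-(j:ℤ))) M]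
      ring
    · subst hM
      rw [show -(((2*M+1:ℕ):ℤ)+1) = 2*(-1-(M:ℤ)) by push_cast; ring,
        show (((2*M+1:ℕ):ℤ)+1) = 2*((M:ℤ)+1) by push_cast; ring, he, he,
        show (2*M+1+1)/2 = M+1 from by omega, show (2*M+1+1+1)/2 = M+1 from by omega,
        show (2*M+1)/2 = M from by omega,
        Finset.sum_range_succ (fun j => c₁ (j:ℤ)) (M+1),
        Finset.sum_range_succ (fun j => c₁ (-1-(j:ℤ))) M]
      push_cast
      ring

open Filter in
lemma tendsto_aux_div (T : ℕ → ℝ) (hT : Tendsto (fun K : ℕ => T K / K) atTop (nhds 0))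
    (K : ℕ → ℕ) (hK : Tendsto K atTop atTop) (hKle : ∀ N, K N ≤ 2*N+1) :
    Tendsto (fun N : ℕ => T (K N) / (2*(N:ℝ)+1)) atTop (nhds 0) := by
  have h1 : Tendsto (fun N => T (K N) / (K N : ℝ)) atTop (nhds 0) := hT.comp hK
  have h2 : Tendsto (fun N => |T (K N) / (K N : ℝ)|) atTop (nhds 0) := by
    have := h1.abs; simpa using this
  refine squeeze_zero_norm' ?_ h2
  filter_upwards [hK.eventually_ge_atTop 1] with N hN
  have hKpos : (0:ℝ) < (K N : ℝ) := by exact_mod_cast hN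
  have hle : (K N : ℝ) ≤ 2*(N:ℝ)+1 := by
    have := hKle N
    exact_mod_cast Nat.cast_le.mpr this
  rw [Real.norm_eq_abs, abs_div, abs_div, abs_of_pos (by positivity : (0:ℝ) < 2*(N:ℝ)+1),
    abs_of_pos hKpos]
  gcongr

open Filter in
lemma tendsto_quarter (f : ℕ → ℕ) (hf : ∀ N, |(f N : ℝ) - (N:ℝ)/2| ≤ 1) :
    Tendsto (fun N : ℕ => (f N : ℝ) / (2*(N:ℝ)+1)) atTop (nhds (1/4)) := by
  have hg : Tendsto (fun N : ℕ => 2/((N:ℝ)+1)) atTop (nhds 0) := by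
    have h2 := tendsto_one_div_add_atTop_nhds_zero_nat.const_mul (2:ℝ)
    simpa [div_eq_mul_inv] using h2
  have key : Tendsto (fun N : ℕ => (f N : ℝ)/(2*(N:ℝ)+1) - 1/4) atTop (nhds 0) := by
    refine squeeze_zero_norm' ?_ hg
    filter_upwards with N
    have hd : (0:ℝ) < 2*(N:ℝ)+1 := by positivity
    have heq : (f N:ℝ)/(2*(N:ℝ)+1) - 1/4 = ((f N:ℝ) - (N:ℝ)/2 - 1/4)/(2*(N:ℝ)+1) := by
      field_simp
      ring
    rw [Real.norm_eq_abs, heq, abs_div, abs_of_pos hd]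
    have hb := abs_le.1 (hf N)
    have hnum : |(f N:ℝ) - (N:ℝ)/2 - 1/4| ≤ 2 := by
      rw [abs_le]; constructor <;> linarith [hb.1, hb.2]
    calc |(f N:ℝ) - (N:ℝ)/2 - 1/4| / (2*(N:ℝ)+1) ≤ 2 / (2*(N:ℝ)+1) := by gcongr
      _ ≤ 2/((N:ℝ)+1) := by
          gcongr <;> linarith [Nat.cast_nonneg (α := ℝ) N]
  have := key.add (tendsto_const_nhds (x := (1/4:ℝ)) (f := atTop))
  simpa using this

end Det

/-- The dimer random sequence: `w(2n) = ε_n`, `w(2n+1) = -ε_n`. -/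
noncomputable def dimerSeq {Ω : Type*} (ε : ℤ → Ω → ℝ) (ω : Ω) (n : ℤ) : ℝ :=
  if Even n then ε (n / 2) ω else -(ε ((n - 1) / 2) ω)

/-- Almost surely, the autocorrelation coefficients of the close-packed dimer
system exist and equal `η(0)=1`, `η(±1)=-1/2`, `η(m)=0` for `|m| ≥ 2`. -/
theorem dimer_autocorrelation
    {Ω : Type*} [MeasurableSpace Ω] (μ : Measure Ω) [IsProbabilityMeasure μ]
    (ε : ℤ → Ω → ℝ) (hmeas : ∀ n, Measurable (ε n))
    (hindep : iIndepFun ε μ)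
    (hone : ∀ n, μ {ω | ε n ω = 1} = 1 / 2)
    (hmone : ∀ n, μ {ω | ε n ω = -1} = 1 / 2) :
    ∀ m : ℤ, ∀ᵐ ω ∂μ, Tendsto
      (fun N : ℕ => (∑ n ∈ Finset.Icc (-(N : ℤ)) N,
        dimerSeq ε ω n * dimerSeq ε ω (n + m)) / (2 * N + 1))
      atTop (nhds (if m = 0 then 1 else if m = 1 ∨ m = -1 then -(1 / 2) else 0)) := by
  intro m
  have hwe : ∀ ω, ∀ k : ℤ, dimerSeq ε ω (2*k) = ε k ω := by
    intro ω k
    have hev : Even (2*k) := ⟨k, two_mul k⟩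
    rw [dimerSeq, if_pos hev, show (2*k)/2 = k from by omega]
  have hwo : ∀ ω, ∀ k : ℤ, dimerSeq ε ω (2*k+1) = -(ε k ω) := by
    intro ω k
    have hod : ¬ Even (2*k+1) := by rw [Int.even_iff]; omega
    rw [dimerSeq, if_neg hod, show (2*k+1-1)/2 = k from by omega]
  have hKa : Tendsto (fun N : ℕ => N/2+1) atTop atTop :=
    tendsto_atTop_atTop.mpr (fun b => ⟨2*b, fun a ha => by omega⟩)
  have hKb : Tendsto (fun N : ℕ => N/2) atTop atTop :=
    tendsto_atTop_atTop.mpr (fun b => ⟨2*b+2, fun a ha => by omega⟩)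
  have hKc : Tendsto (fun N : ℕ => (N+1)/2) atTop atTop :=
    tendsto_atTop_atTop.mpr (fun b => ⟨2*b+2, fun a ha => by omega⟩)
  have hLa : ∀ N : ℕ, N/2+1 ≤ 2*N+1 := fun N => by omega
  have hLb : ∀ N : ℕ, N/2 ≤ 2*N+1 := fun N => by omega
  have hLc : ∀ N : ℕ, (N+1)/2 ≤ 2*N+1 := fun N => by omega
  have hfa : ∀ N : ℕ, |(((N/2+1 : ℕ)) : ℝ) - (N:ℝ)/2| ≤ 1 := by
    intro N
    rcases Nat.even_or_odd N with ⟨M, hM⟩ | ⟨M, hM⟩ <;> subst hM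
    · rw [show (M+M)/2+1 = M+1 from by omega]
      push_cast
      rw [abs_le]; constructor <;> linarith
    · rw [show (2*M+1)/2+1 = M+1 from by omega]
      push_cast
      rw [abs_le]; constructor <;> linarith
  have hfb : ∀ N : ℕ, |(((N/2 : ℕ)) : ℝ) - (N:ℝ)/2| ≤ 1 := by
    intro N
    rcases Nat.even_or_odd N with ⟨M, hM⟩ | ⟨M, hM⟩ <;> subst hM
    · rw [show (M+M)/2 = M from by omega]
      push_cast
      rw [abs_le]; constructor <;> linarith
    · rw [show (2*M+1)/2 = M from by omega]
      push_cast
      rw [abs_le]; constructor <;> linarith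
  have hfc : ∀ N : ℕ, |((((N+1)/2 : ℕ)) : ℝ) - (N:ℝ)/2| ≤ 1 := by
    intro N
    rcases Nat.even_or_odd N with ⟨M, hM⟩ | ⟨M, hM⟩ <;> subst hM
    · rw [show (M+M+1)/2 = M from by omega]
      push_cast
      rw [abs_le]; constructor <;> linarith
    · rw [show (2*M+1+1)/2 = M+1 from by omega]
      push_cast
      rw [abs_le]; constructor <;> linarith
  have hinjP : Function.Injective (fun i : ℕ => (i:ℤ)) := fun i j h => by
    simpa using h
  have hinjN : Function.Injective (fun i : ℕ => -1-(i:ℤ)) := fun i j h => by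
    simp only at h; omega
  by_cases hm0 : m = 0
  · subst hm0
    rw [if_pos rfl]
    filter_upwards [sign_ae μ ε hone hmone hmeas] with ω hs
    have hsq : ∀ n : ℤ, dimerSeq ε ω n * dimerSeq ε ω (n + 0) = 1 := by
      intro n
      rw [add_zero]
      rcases Int.even_or_odd n with ⟨k, hk⟩ | ⟨k, hk⟩
      · rw [show n = 2*k from by omega, hwe]
        rcases hs k with h|h <;> rw [h] <;> norm_num
      · rw [hk, hwo]
        rcases hs k with h|h <;> rw [h] <;> norm_num
    have hfun : (fun N : ℕ => (∑ n ∈ Finset.Icc (-(N:ℤ)) N,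
        dimerSeq ε ω n * dimerSeq ε ω (n + 0)) / (2*(N:ℝ)+1)) = fun _ => (1:ℝ) := by
      funext N
      rw [Finset.sum_congr rfl (fun n _ => hsq n), Finset.sum_const, Int.card_Icc,
        show ((N:ℤ)+1 - -(N:ℤ)).toNat = 2*N+1 from by omega, nsmul_eq_mul, mul_one]
      push_cast
      rw [div_self (by positivity)]
    rw [hfun]
    exact tendsto_const_nhds
  by_cases hm1 : m = 1
  · subst hm1
    rw [if_neg (by norm_num), if_pos (Or.inl rfl)]
    filter_upwards [sign_ae μ ε hone hmone hmeas,
      slln μ ε hmeas hindep hone hmone (fun i => (i:ℤ)) hinjP 1 one_ne_zero,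
      slln μ ε hmeas hindep hone hmone (fun i => -1-(i:ℤ)) hinjN 1 one_ne_zero]
      with ω hs h3 h4
    have he : ∀ k : ℤ, dimerSeq ε ω (2*k) * dimerSeq ε ω (2*k + 1) = (-1:ℝ) := by
      intro k
      rw [hwe, hwo]
      rcases hs k with h|h <;> rw [h] <;> norm_num
    have ho : ∀ k : ℤ, dimerSeq ε ω (2*k+1) * dimerSeq ε ω (2*k+1 + 1)
        = -(ε k ω * ε (k + 1) ω) := by
      intro k
      rw [show 2*k+1+1 = 2*(k+1) from by ring, hwo, hwe, neg_mul]
    have hrw := sum_Icc_parity (fun n => dimerSeq ε ω n * dimerSeq ε ω (n + 1))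
      (fun _ => (-1:ℝ)) (fun k => -(ε k ω * ε (k + 1) ω)) he ho
    have t1 := (tendsto_quarter (fun N => N/2+1) hfa).neg
    have t2 := (tendsto_quarter (fun N => N/2) hfb).neg
    have t3 := (tendsto_aux_div (fun K => ∑ i ∈ Finset.range K,
      ε (i:ℤ) ω * ε ((i:ℤ) + 1) ω) h3 (fun N => (N+1)/2) hKc hLc).neg
    have t4 := (tendsto_aux_div (fun K => ∑ i ∈ Finset.range K,
      ε (-1-(i:ℤ)) ω * ε ((-1-(i:ℤ)) + 1) ω) h4 (fun N => (N+1)/2) hKc hLc).neg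
    have hlim := (t1.add t2).add (t3.add t4)
    rw [show -(1/4 : ℝ) + -(1/4) + (-0 + -0) = -(1/2) from by norm_num] at hlim
    refine Tendsto.congr ?_ hlim
    intro N
    rw [hrw N]
    simp only [Finset.sum_neg_distrib, Finset.sum_const, Finset.card_range,
      nsmul_eq_mul, mul_neg_one]
    ring
  by_cases hmm1 : m = -1
  · subst hmm1
    rw [if_neg (by norm_num), if_pos (Or.inr rfl)]
    filter_upwards [sign_ae μ ε hone hmone hmeas,
      slln μ ε hmeas hindep hone hmone (fun i => (i:ℤ)) hinjP (-1) (by norm_num),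
      slln μ ε hmeas hindep hone hmone (fun i => -1-(i:ℤ)) hinjN (-1) (by norm_num)]
      with ω hs h1 h2
    have he : ∀ k : ℤ, dimerSeq ε ω (2*k) * dimerSeq ε ω (2*k + -1)
        = -(ε k ω * ε (k + -1) ω) := by
      intro k
      rw [show 2*k + (-1:ℤ) = 2*(k + -1)+1 from by ring, hwe, hwo, mul_neg]
    have ho : ∀ k : ℤ, dimerSeq ε ω (2*k+1) * dimerSeq ε ω (2*k+1 + -1) = (-1:ℝ) := by
      intro k
      rw [show 2*k+1 + (-1:ℤ) = 2*k from by ring, hwo, hwe]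
      rcases hs k with h|h <;> rw [h] <;> norm_num
    have hrw := sum_Icc_parity (fun n => dimerSeq ε ω n * dimerSeq ε ω (n + -1))
      (fun k => -(ε k ω * ε (k + -1) ω)) (fun _ => (-1:ℝ)) he ho
    have t1 := (tendsto_aux_div (fun K => ∑ i ∈ Finset.range K,
      ε (i:ℤ) ω * ε ((i:ℤ) + -1) ω) h1 (fun N => N/2+1) hKa hLa).neg
    have t2 := (tendsto_aux_div (fun K => ∑ i ∈ Finset.range K,
      ε (-1-(i:ℤ)) ω * ε ((-1-(i:ℤ)) + -1) ω) h2 (fun N => N/2) hKb hLb).neg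
    have t3 := (tendsto_quarter (fun N => (N+1)/2) hfc).neg
    have t4 := (tendsto_quarter (fun N => (N+1)/2) hfc).neg
    have hlim := (t1.add t2).add (t3.add t4)
    rw [show -(0:ℝ) + -0 + (-(1/4) + -(1/4)) = -(1/2) from by norm_num] at hlim
    refine Tendsto.congr ?_ hlim
    intro N
    rw [hrw N]
    simp only [Finset.sum_neg_distrib, Finset.sum_const, Finset.card_range,
      nsmul_eq_mul, mul_neg_one]
    ring
  rw [if_neg hm0, if_neg (by omega)]
  rcases Int.even_or_odd m with ⟨d, hd⟩ | ⟨d, hd⟩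
  · -- m = d + d, d ≠ 0
    have hd0 : d ≠ 0 := by omega
    filter_upwards [slln μ ε hmeas hindep hone hmone (fun i => (i:ℤ)) hinjP d hd0,
      slln μ ε hmeas hindep hone hmone (fun i => -1-(i:ℤ)) hinjN d hd0] with ω h1 h2
    have he : ∀ k : ℤ, dimerSeq ε ω (2*k) * dimerSeq ε ω (2*k + m)
        = ε k ω * ε (k + d) ω := by
      intro k
      rw [hd, show 2*k + (d+d) = 2*(k+d) from by ring, hwe, hwe]
    have ho : ∀ k : ℤ, dimerSeq ε ω (2*k+1) * dimerSeq ε ω (2*k+1 + m)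
        = ε k ω * ε (k + d) ω := by
      intro k
      rw [hd, show 2*k+1 + (d+d) = 2*(k+d)+1 from by ring, hwo, hwo, neg_mul_neg]
    have hrw := sum_Icc_parity (fun n => dimerSeq ε ω n * dimerSeq ε ω (n + m))
      (fun k => ε k ω * ε (k + d) ω) (fun k => ε k ω * ε (k + d) ω) he ho
    have t1 := tendsto_aux_div (fun K => ∑ i ∈ Finset.range K,
      ε (i:ℤ) ω * ε ((i:ℤ) + d) ω) h1 (fun N => N/2+1) hKa hLa
    have t2 := tendsto_aux_div (fun K => ∑ i ∈ Finset.range K,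
      ε (-1-(i:ℤ)) ω * ε ((-1-(i:ℤ)) + d) ω) h2 (fun N => N/2) hKb hLb
    have t3 := tendsto_aux_div (fun K => ∑ i ∈ Finset.range K,
      ε (i:ℤ) ω * ε ((i:ℤ) + d) ω) h1 (fun N => (N+1)/2) hKc hLc
    have t4 := tendsto_aux_div (fun K => ∑ i ∈ Finset.range K,
      ε (-1-(i:ℤ)) ω * ε ((-1-(i:ℤ)) + d) ω) h2 (fun N => (N+1)/2) hKc hLc
    have hlim := (t1.add t2).add (t3.add t4)
    rw [show (0:ℝ) + 0 + (0 + 0) = 0 from by norm_num] at hlim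
    refine Tendsto.congr ?_ hlim
    intro N
    rw [hrw N]
    ring
  · -- m = 2*d+1, d ≠ 0, d ≠ -1
    have hd0 : d ≠ 0 := by omega
    have hd1 : d + 1 ≠ 0 := by omega
    filter_upwards [slln μ ε hmeas hindep hone hmone (fun i => (i:ℤ)) hinjP d hd0,
      slln μ ε hmeas hindep hone hmone (fun i => -1-(i:ℤ)) hinjN d hd0,
      slln μ ε hmeas hindep hone hmone (fun i => (i:ℤ)) hinjP (d+1) hd1,
      slln μ ε hmeas hindep hone hmone (fun i => -1-(i:ℤ)) hinjN (d+1) hd1]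
      with ω h1 h2 h3 h4
    have he : ∀ k : ℤ, dimerSeq ε ω (2*k) * dimerSeq ε ω (2*k + m)
        = -(ε k ω * ε (k + d) ω) := by
      intro k
      rw [hd, show 2*k + (2*d+1) = 2*(k+d)+1 from by ring, hwe, hwo, mul_neg]
    have ho : ∀ k : ℤ, dimerSeq ε ω (2*k+1) * dimerSeq ε ω (2*k+1 + m)
        = -(ε k ω * ε (k + (d+1)) ω) := by
      intro k
      rw [hd, show 2*k+1 + (2*d+1) = 2*(k+(d+1)) from by ring, hwo, hwe, neg_mul]
    have hrw := sum_Icc_parity (fun n => dimerSeq ε ω n * dimerSeq ε ω (n + m))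
      (fun k => -(ε k ω * ε (k + d) ω)) (fun k => -(ε k ω * ε (k + (d+1)) ω)) he ho
    have t1 := (tendsto_aux_div (fun K => ∑ i ∈ Finset.range K,
      ε (i:ℤ) ω * ε ((i:ℤ) + d) ω) h1 (fun N => N/2+1) hKa hLa).neg
    have t2 := (tendsto_aux_div (fun K => ∑ i ∈ Finset.range K,
      ε (-1-(i:ℤ)) ω * ε ((-1-(i:ℤ)) + d) ω) h2 (fun N => N/2) hKb hLb).neg
    have t3 := (tendsto_aux_div (fun K => ∑ i ∈ Finset.range K,
      ε (i:ℤ) ω * ε ((i:ℤ) + (d+1)) ω) h3 (fun N => (N+1)/2) hKc hLc).neg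
    have t4 := (tendsto_aux_div (fun K => ∑ i ∈ Finset.range K,
      ε (-1-(i:ℤ)) ω * ε ((-1-(i:ℤ)) + (d+1)) ω) h4 (fun N => (N+1)/2) hKc hLc).neg
    have hlim := (t1.add t2).add (t3.add t4)
    rw [show -(0:ℝ) + -0 + (-0 + -0) = 0 from by norm_num] at hlim
    refine Tendsto.congr ?_ hlim
    intro N
    rw [hrw N]
    simp only [Finset.sum_neg_distrib]
    ring
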